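/- Let d be a pseudometric on ℕ₀³ with coordinatewise λ-contraction property, no 1-way Cauchy sequence, and μ = inf ρ > 0. Suppose points y₀, y₁, y₂, ... in ℕ₀³ satisfy yₙ = y₀ + n·e₃ for all n, together with: d(yₙ+e₁, yₙ+e₂) ≤ 4λ^{n+1}μ, d(yₙ+e₁, y_{n+1}+e₁) ≤ (45+8n)λ^{n+1}μ, and d(yₙ+e₂, y_{n+1}+e₂) ≤ (45+8n)λ^{n+1}μ for all n ≥ 0, with λ < 1/2. Then (yₙ+e₁)_{n≥0} is a Cauchy sequence in (ℕ₀³,d), and consequently a 1-way Cauchy sequence exists — a contradiction. Hence no such family of points exists. -/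

import Mathlib

/-- The grid ℕ₀³. -/
abbrev Grid : Type := Fin 3 → ℕ

/-- Standard basis vector eᵢ. -/
def e (i : Fin 3) : Grid := fun j => if j = i then 1 else 0

/-- ρ(x) = max of the three distances to successors. -/
noncomputable def rho (d : Grid → Grid → ℝ) (x : Grid) : ℝ :=
  max (d x (x + e 0)) (max (d x (x + e 1)) (d x (x + e 2)))

/-- A 1-way sequence: consecutive differences are basis vectors. -/
def OneWay (s : ℕ → Grid) : Prop := ∀ n, ∃ i, s (n + 1) = s n + e i

/-- Cauchy with respect to the pseudometric d. -/
def IsCauchySeq (d : Grid → Grid → ℝ) (s : ℕ → Grid) : Prop :=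
  ∀ ε > (0 : ℝ), ∃ N, ∀ m ≥ N, ∀ n ≥ N, d (s m) (s n) < ε

/-- d is a pseudometric. -/
def Pseudo (d : Grid → Grid → ℝ) : Prop :=
  (∀ x, d x x = 0) ∧ (∀ x y, 0 ≤ d x y) ∧ (∀ x y, d x y = d y x) ∧
    (∀ x y z, d x z ≤ d x y + d y z)

/-- The coordinatewise λ-contraction property. -/
def Contractive (d : Grid → Grid → ℝ) (lam : ℝ) : Prop :=
  ∀ a b : Grid, ∃ i : Fin 3, d (a + e i) (b + e i) ≤ lam * d a b

/-- A 2-way set: each element has exactly two of its three successors inside. -/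
def TwoWaySet (S : Set Grid) : Prop :=
  ∀ s ∈ S, ∃ i : Fin 3, s + e i ∉ S ∧ ∀ j : Fin 3, j ≠ i → s + e j ∈ S

theorem stmt19 (d : Grid → Grid → ℝ) (lam : ℝ) (h0 : 0 < lam) (h1 : lam < 1/2)
    (hd : Pseudo d) (hc : Contractive d lam)
    (hno : ¬ ∃ s : ℕ → Grid, OneWay s ∧ IsCauchySeq d s)
    (μ : ℝ) (hμ : IsGLB (Set.range (rho d)) μ) (hμ0 : 0 < μ)
    (y₀ : Grid) (y : ℕ → Grid) (hy : ∀ n : ℕ, y n = y₀ + n • e 2)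
    (hb1 : ∀ n : ℕ, d (y n + e 0) (y n + e 1) ≤ 4 * lam ^ (n + 1) * μ)
    (hb2 : ∀ n : ℕ, d (y n + e 0) (y (n + 1) + e 0) ≤ (45 + 8 * (n : ℝ)) * lam ^ (n + 1) * μ)
    (hb3 : ∀ n : ℕ, d (y n + e 1) (y (n + 1) + e 1) ≤ (45 + 8 * (n : ℝ)) * lam ^ (n + 1) * μ) :
    False := by
  apply hno
  set s : ℕ → Grid := fun n => y n + e 0 with hs
  set c : ℕ → ℝ := fun n => (45 + 8 * (n : ℝ)) * lam ^ (n + 1) * μ with hcdef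
  have hcnn : ∀ n, 0 ≤ c n := by
    intro n
    have : (0:ℝ) ≤ 45 + 8 * (n:ℝ) := by positivity
    exact mul_nonneg (mul_nonneg this (pow_nonneg h0.le _)) hμ0.le
  have hlam1 : lam < 1 := by linarith
  have hsum : Summable c := by
    have h45 : Summable (fun n : ℕ => (45:ℝ) * lam ^ n) :=
      (summable_geometric_of_lt_one h0.le hlam1).mul_left 45
    have h8 : Summable (fun n : ℕ => 8 * ((n:ℝ) * lam ^ n)) := by
      have := summable_pow_mul_geometric_of_norm_lt_one (R := ℝ) 1
        (r := lam) (by rw [Real.norm_eq_abs, abs_of_pos h0]; exact hlam1)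
      simpa [pow_one] using this.mul_left 8
    have : Summable (fun n : ℕ => ((45:ℝ) + 8 * (n:ℝ)) * lam ^ n) := by
      have := h45.add h8
      convert this using 2 with n
      ring
    have := this.mul_right (lam * μ)
    refine this.congr (fun n => ?_)
    simp only [c]
    ring
  refine ⟨s, ?_, ?_⟩
  · intro n
    refine ⟨2, ?_⟩
    simp only [hs]
    rw [hy (n+1), hy n]
    funext j
    simp only [Pi.add_apply, Pi.smul_apply, smul_eq_mul, e]
    split_ifs <;> omega
  · -- key bound
    have key : ∀ m n, m ≤ n → d (s m) (s n) ≤ ∑ k ∈ Finset.Ico m n, c k := by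
      intro m n hmn
      induction n, hmn using Nat.le_induction with
      | base => simp [hd.1]
      | succ n hmn ih =>
        have htri := hd.2.2.2 (s m) (s n) (s (n+1))
        have hstep : d (s n) (s (n+1)) ≤ c n := hb2 n
        have : d (s m) (s (n+1)) ≤ (∑ k ∈ Finset.Ico m n, c k) + c n := by
          calc d (s m) (s (n+1)) ≤ d (s m) (s n) + d (s n) (s (n+1)) := htri
            _ ≤ (∑ k ∈ Finset.Ico m n, c k) + c n := add_le_add ih hstep
        rwa [Finset.sum_Ico_succ_top hmn]
    intro ε hε
    have htail : Filter.Tendsto (fun i => ∑' k, c (k + i)) Filter.atTop (nhds 0) :=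
      tendsto_sum_nat_add c
    obtain ⟨N, hN⟩ := (Filter.tendsto_atTop'.mp (htail)) (Set.Iio ε) (Iio_mem_nhds hε)
    refine ⟨N, ?_⟩
    have main : ∀ m n, N ≤ m → m ≤ n → d (s m) (s n) < ε := by
      intro m n hNm hmn
      have h1' : d (s m) (s n) ≤ ∑ k ∈ Finset.Ico m n, c k := key m n hmn
      have h2' : ∑ k ∈ Finset.Ico m n, c k ≤ ∑ k ∈ Finset.Ico N n, c k := by
        apply Finset.sum_le_sum_of_subset_of_nonneg
        · exact Finset.Ico_subset_Ico hNm le_rfl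
        · intro k _ _; exact hcnn k
      have hsum' : Summable (fun k => c (k + N)) := (summable_nat_add_iff N).2 hsum
      have h3' : ∑ k ∈ Finset.Ico N n, c k ≤ ∑' k, c (k + N) := by
        rcases le_or_gt N n with hNn | hnN
        · rw [Finset.sum_Ico_eq_sum_range]
          calc ∑ k ∈ Finset.range (n - N), c (N + k)
              = ∑ k ∈ Finset.range (n - N), c (k + N) := by
                apply Finset.sum_congr rfl; intro k _; rw [Nat.add_comm]
            _ ≤ ∑' k, c (k + N) := Summable.sum_le_tsum _ (fun k _ => hcnn _) hsum'
        · rw [Finset.Ico_eq_empty (by omega)]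
          simp [tsum_nonneg (fun k => hcnn (k + N))]
      have h4' : ∑' k, c (k + N) < ε := hN N le_rfl
      linarith
    intro m hm n hn
    rcases le_total m n with h | h
    · exact main m n hm h
    · rw [hd.2.2.1]; exact main n m hn h
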